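/- The total number of runs r̃ in the PBWT of a list of h haplotypes of length w is at least the number of distinct strings among S_1,…,S_h. -/

import Mathlib

namespace PBWT

/-- The reversed prefix of length `j` (truncated at `w`) of haplotype `i`:
used to express the co-lexicographic order of prefixes. -/
def revPrefix {h w : ℕ} (S : Fin h → Fin w → ℕ) (j : ℕ) (i : Fin h) : List ℕ :=
  ((List.range j).filterMap (fun t => if ht : t < w then some (S i ⟨t, ht⟩) else none)).reverse

/-- `PA` is the stable sort of the haplotype indices by the co-lexicographic
order of their prefixes of length `j` (ties broken by original index). -/
def IsStableSort {h w : ℕ} (S : Fin h → Fin w → ℕ) (j : ℕ) (PA : Fin h ≃ Fin h) : Prop :=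
  ∀ a b : Fin h, a < b →
    List.Lex (· < ·) (revPrefix S j (PA a)) (revPrefix S j (PA b)) ∨
      (revPrefix S j (PA a) = revPrefix S j (PA b) ∧ (PA a).val < (PA b).val)

/-- Number of maximal runs of equal adjacent values in the sequence `f`. -/
def runCount {α : Type*} [DecidableEq α] {n : ℕ} (f : Fin n → α) : ℕ :=
  ((List.ofFn f).destutter (· ≠ ·)).length

/-- `h''`: the number of indices `i` with `S i ≠ S (i+1)`. -/
noncomputable def adjDiff {h w : ℕ} (S : Fin h → Fin w → ℕ) : ℕ :=
  Nat.card {i : Fin h // ∃ h1 : (i : ℕ) + 1 < h, S i ≠ S ⟨(i : ℕ) + 1, h1⟩}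

/-! ### Auxiliary lemmas -/

section Aux

variable {α β : Type*}

/-- Every element of `b :: l` survives destuttering by `≠`. -/
lemma mem_destutter'_ne [DecidableEq α] :
    ∀ (l : List α) (b : α), ∀ a ∈ b :: l, a ∈ l.destutter' (· ≠ ·) b := by
  intro l
  induction l with
  | nil => simp
  | cons c l ih =>
    intro b a ha
    by_cases hbc : b ≠ c
    · rw [List.destutter'_cons_pos (R := (· ≠ ·)) _ hbc]
      rcases List.mem_cons.1 ha with rfl | ha'
      · exact List.mem_cons_self
      · exact List.mem_cons_of_mem _ (ih c a ha')
    · rw [List.destutter'_cons_neg _ hbc]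
      obtain rfl : b = c := not_ne_iff.mp hbc
      rcases List.mem_cons.1 ha with rfl | ha'
      · exact ih _ _ (List.mem_cons_self)
      · exact ih _ a ha'

lemma toFinset_subset_destutter_ne [DecidableEq α] (l : List α) :
    l.toFinset ⊆ (l.destutter (· ≠ ·)).toFinset := by
  cases l with
  | nil => simp
  | cons b t =>
    intro a ha
    rw [List.mem_toFinset] at ha ⊢
    rw [List.destutter_cons']
    exact mem_destutter'_ne t b a ha

lemma ofFn_toFinset {n : ℕ} [DecidableEq α] (f : Fin n → α) :
    (List.ofFn f).toFinset = Finset.image f Finset.univ := by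
  ext a
  simp [List.mem_ofFn, eq_comm]

/-- The number of distinct values is at most the number of runs. -/
lemma card_image_le_runCount {n : ℕ} [DecidableEq α] (f : Fin n → α) :
    (Finset.image f Finset.univ).card ≤ runCount f := by
  calc (Finset.image f Finset.univ).card
      = (List.ofFn f).toFinset.card := by rw [ofFn_toFinset]
    _ ≤ ((List.ofFn f).destutter (· ≠ ·)).toFinset.card :=
        Finset.card_le_card (toFinset_subset_destutter_ne _)
    _ ≤ ((List.ofFn f).destutter (· ≠ ·)).length := List.toFinset_card_le _

/-- Runs of a sequence of pairs vs runs of the component sequences. -/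
lemma destutter'_pair_le [DecidableEq α] [DecidableEq β] :
    ∀ (l : List (α × β)) (a : α × β),
      (l.destutter' (· ≠ ·) a).length + 1 ≤
        ((l.map Prod.fst).destutter' (· ≠ ·) a.1).length +
          ((l.map Prod.snd).destutter' (· ≠ ·) a.2).length := by
  intro l
  induction l with
  | nil => simp
  | cons b l ih =>
    intro a
    by_cases hab : a = b
    · subst hab
      rw [List.destutter'_cons_neg _ (by simp), List.map_cons,
        List.destutter'_cons_neg _ (by simp), List.map_cons,
        List.destutter'_cons_neg _ (by simp)]
      exact ih a
    · rw [List.destutter'_cons_pos (R := (· ≠ ·)) _ hab, List.map_cons, List.map_cons]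
      have hih := ih b
      by_cases h1 : a.1 = b.1
      · have h2 : a.2 ≠ b.2 := by
          intro h2; exact hab (Prod.ext h1 h2)
        rw [List.destutter'_cons_neg _ (by simpa using h1),
          List.destutter'_cons_pos (R := (· ≠ ·)) _ h2, h1]
        simp only [List.length_cons]
        omega
      · by_cases h2 : a.2 = b.2
        · rw [List.destutter'_cons_pos (R := (· ≠ ·)) _ h1,
            List.destutter'_cons_neg _ (by simpa using h2), h2]
          simp only [List.length_cons]
          omega
        · rw [List.destutter'_cons_pos (R := (· ≠ ·)) _ h1, List.destutter'_cons_pos (R := (· ≠ ·)) _ h2]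
          simp only [List.length_cons]
          omega

lemma runCount_pair_le {n : ℕ} [DecidableEq α] [DecidableEq β]
    (hn : 0 < n) (f : Fin n → α) (g : Fin n → β) :
    runCount (fun i => (f i, g i)) + 1 ≤ runCount f + runCount g := by
  unfold runCount
  obtain ⟨m, rfl⟩ : ∃ m, n = m + 1 := ⟨n - 1, by omega⟩
  rw [List.ofFn_succ, List.ofFn_succ, List.ofFn_succ, List.destutter_cons',
    List.destutter_cons', List.destutter_cons']
  have := destutter'_pair_le (α := α) (β := β)
    (List.ofFn fun i : Fin m => (f i.succ, g i.succ)) (f 0, g 0)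
  rw [List.map_ofFn, List.map_ofFn] at this
  exact this

/-- For a monotone sequence, the number of runs is at most the number of
distinct values. -/
lemma runCount_le_card_image {n : ℕ} {α : Type*} [LinearOrder α] [DecidableEq α]
    (f : Fin n → α) (hf : Monotone f) :
    runCount f ≤ (Finset.image f Finset.univ).card := by
  set l := List.ofFn f with hl
  set d := l.destutter (· ≠ ·) with hd
  have hsorted : l.Pairwise (· ≤ ·) := by
    rw [hl, List.pairwise_ofFn]
    exact fun i j hij => hf hij.le
  have hdsorted : d.Pairwise (· ≤ ·) := hsorted.sublist (List.destutter_sublist _ _)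
  have hchain : d.IsChain (· ≠ ·) := List.isChain_destutter _ _
  have hlt : d.IsChain (· < ·) := by
    rw [List.isChain_iff_getElem] at hchain ⊢
    intro i hi
    refine lt_of_le_of_ne ?_ (hchain i hi)
    have := List.pairwise_iff_get.1 hdsorted
    exact this ⟨i, by omega⟩ ⟨i + 1, by omega⟩ (by simp)
  have hnodup : d.Nodup := (List.isChain_iff_pairwise.1 hlt).imp ne_of_lt
  calc d.length = d.toFinset.card := (List.toFinset_card_of_nodup hnodup).symm
    _ ≤ l.toFinset.card := Finset.card_le_card
        (fun a ha => by
          rw [List.mem_toFinset] at ha ⊢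
          exact (List.destutter_sublist _ _).mem ha)
    _ = (Finset.image f Finset.univ).card := by rw [hl, ofFn_toFinset]

lemma image_comp_equiv {n : ℕ} [DecidableEq α] (f : Fin n → α) (e : Fin n ≃ Fin n) :
    Finset.image (fun i => f (e i)) Finset.univ = Finset.image f Finset.univ := by
  ext a
  simp only [Finset.mem_image, Finset.mem_univ, true_and]
  constructor
  · rintro ⟨i, rfl⟩; exact ⟨e i, rfl⟩
  · rintro ⟨i, rfl⟩; exact ⟨e.symm i, by simp⟩

end Aux

/-! ### Facts about `revPrefix` -/

lemma revPrefix_succ {h w : ℕ} (S : Fin h → Fin w → ℕ) (j : Fin w) (i : Fin h) :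
    revPrefix S ((j : ℕ) + 1) i = S i j :: revPrefix S (j : ℕ) i := by
  unfold revPrefix
  rw [List.range_succ, List.filterMap_append]
  simp [j.2]

lemma revPrefix_zero {h w : ℕ} (S : Fin h → Fin w → ℕ) (i : Fin h) :
    revPrefix S 0 i = [] := by
  simp [revPrefix]

lemma revPrefix_w {h w : ℕ} (S : Fin h → Fin w → ℕ) (i : Fin h) :
    revPrefix S w i = (List.ofFn (S i)).reverse := by
  unfold revPrefix
  congr 1
  have key : ∀ (n : ℕ) (hn : n ≤ w),
      (List.range n).filterMap (fun t => if ht : t < w then some (S i ⟨t, ht⟩) else none)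
        = List.ofFn (fun k : Fin n => S i ⟨k, lt_of_lt_of_le k.2 hn⟩) := by
    intro n
    induction n with
    | zero => simp
    | succ n ih =>
      intro hn
      rw [List.range_succ, List.filterMap_append, ih (by omega), List.ofFn_succ']
      simp only [List.filterMap_cons, List.filterMap_nil, dif_pos (show n < w by omega),
        List.concat_eq_append]
      rfl
  rw [key w le_rfl]

/-! ### The key column step -/

lemma column_step {h w : ℕ} (hh : 0 < h) (S : Fin h → Fin w → ℕ) (j : Fin w)
    (PA : Fin h ≃ Fin h) (hPA : IsStableSort S (j : ℕ) PA) :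
    (Finset.image (revPrefix S ((j : ℕ) + 1)) Finset.univ).card + 1 ≤
      (Finset.image (revPrefix S (j : ℕ)) Finset.univ).card +
        runCount (fun i : Fin h => S (PA i) j) := by
  set p : Fin h → List ℕ := fun i => revPrefix S (j : ℕ) (PA i) with hp
  set s : Fin h → ℕ := fun i => S (PA i) j with hs
  -- monotonicity of p
  have hmono : Monotone p := by
    intro a b hab
    rcases lt_or_eq_of_le hab with hab | rfl
    · rcases hPA a b hab with hlex | ⟨heq, _⟩
      · exact le_of_lt hlex
      · exact le_of_eq heq
    · exact le_rfl
  -- rewrite the (j+1)-image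
  have himg1 : Finset.image (revPrefix S ((j : ℕ) + 1)) Finset.univ
      = Finset.image (fun i => s i :: p i) Finset.univ := by
    rw [← image_comp_equiv (revPrefix S ((j : ℕ) + 1)) PA]
    congr 1
    funext i
    rw [revPrefix_succ]
  have himg2 : Finset.image (revPrefix S (j : ℕ)) Finset.univ
      = Finset.image p Finset.univ :=
    (image_comp_equiv (revPrefix S (j : ℕ)) PA).symm
  -- cons vs pairs
  have hcons : (Finset.image (fun i => s i :: p i) Finset.univ).card
      = (Finset.image (fun i => (s i, p i)) Finset.univ).card := by
    have : (fun i : Fin h => s i :: p i)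
        = (fun x : ℕ × List ℕ => x.1 :: x.2) ∘ (fun i => (s i, p i)) := rfl
    rw [this, ← Finset.image_image]
    apply Finset.card_image_of_injective
    intro x y hxy
    simpa [Prod.ext_iff] using hxy
  have h1 : (Finset.image (fun i => (s i, p i)) Finset.univ).card ≤
      runCount (fun i => (s i, p i)) := card_image_le_runCount _
  have h2 : runCount (fun i => (s i, p i)) + 1 ≤ runCount s + runCount p :=
    runCount_pair_le hh s p
  have h3 : runCount p ≤ (Finset.image p Finset.univ).card :=
    runCount_le_card_image p hmono
  rw [himg1, himg2, hcons]
  have : runCount (fun i : Fin h => S (PA i) j) = runCount s := rfl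
  omega

theorem stmt1 (h w : ℕ) (hw : 0 < w) (S : Fin h → Fin w → ℕ) (PA : Fin w → Fin h ≃ Fin h)
    (hPA : ∀ j : Fin w, IsStableSort S (j : ℕ) (PA j)) :
    (Set.range S).ncard ≤ ∑ j : Fin w, runCount (fun i : Fin h => S (PA j i) j) := by
  rcases Nat.eq_zero_or_pos h with rfl | hh
  · have : Set.range S = ∅ := Set.range_eq_empty _
    simp [this]
  -- abbreviations
  set D : ℕ → ℕ := fun j => (Finset.image (revPrefix S j) Finset.univ).card with hD
  set g : ℕ → ℕ := fun j =>
    if hj : j < w then runCount (fun i : Fin h => S (PA ⟨j, hj⟩ i) ⟨j, hj⟩) else 0 with hg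
  -- rewrite the sum
  have hsum : ∑ j : Fin w, runCount (fun i : Fin h => S (PA j i) j)
      = ∑ j ∈ Finset.range w, g j := by
    rw [Finset.sum_range fun j => g j]
    apply Finset.sum_congr rfl
    intro j _
    simp only [hg, dif_pos j.2]
  -- the ncard as D w
  have hn : (Set.range S).ncard = D w := by
    have h0 : (Set.range S).ncard = (Finset.image S Finset.univ).card := by
      rw [← Set.image_univ, ← Finset.coe_univ, ← Finset.coe_image, Set.ncard_coe_finset]
    have h1 : revPrefix S w = (fun v : Fin w → ℕ => (List.ofFn v).reverse) ∘ S := by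
      funext i
      exact revPrefix_w S i
    have h2 : Function.Injective (fun v : Fin w → ℕ => (List.ofFn v).reverse) := by
      intro x y hxy
      simp only [List.reverse_inj, List.ofFn_inj] at hxy
      exact hxy
    rw [h0]
    show _ = (Finset.image (revPrefix S w) Finset.univ).card
    rw [h1, ← Finset.image_image, Finset.card_image_of_injective _ h2]
  -- D 0 = 1
  have hD0 : D 0 = 1 := by
    have : Finset.image (revPrefix S 0) Finset.univ = {([] : List ℕ)} := by
      ext a
      simp [revPrefix_zero, Fin.pos_iff_nonempty.1 hh]
    simp [hD, this]
  -- the step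
  have hstep : ∀ j, j < w → D (j + 1) + 1 ≤ D j + g j := by
    intro j hj
    have := column_step hh S ⟨j, hj⟩ (PA ⟨j, hj⟩) (hPA ⟨j, hj⟩)
    simp only [hg, dif_pos hj]
    exact this
  -- induction
  have hmain : ∀ k, k ≤ w → D k + k ≤ D 0 + ∑ j ∈ Finset.range k, g j := by
    intro k
    induction k with
    | zero => simp
    | succ k ih =>
      intro hk
      have h1 := ih (by omega)
      have h2 := hstep k (by omega)
      rw [Finset.sum_range_succ]
      omega
  have := hmain w le_rfl
  rw [hsum, hn]
  omega

end PBWT
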